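/- For every natural number m ≥ 1, (2m)!!/(2m+1)!! satisfies the bounds √π/(2√(m+1)) < (2m)!!/(2m+1)!! < √π/(2√m). -/

import Mathlib

open Nat Real

open intervalIntegral Finset in
private lemma W_mul_succ (n : ℕ) :
    (∫ x in (0:ℝ)..π, Real.sin x ^ n) * (∫ x in (0:ℝ)..π, Real.sin x ^ (n + 1)) =
      2 * π / (n + 1) := by
  induction n with
  | zero =>
    have h0 : (∫ x in (0:ℝ)..π, Real.sin x ^ 0) = π := by
      simpa using integral_sin_pow_even (n := 0)
    have h1 : (∫ x in (0:ℝ)..π, Real.sin x ^ 1) = 2 := by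
      simpa using integral_sin_pow_odd (n := 0)
    rw [h0, h1]; ring
  | succ n ih =>
    have hrec : (∫ x in (0:ℝ)..π, Real.sin x ^ (n + 2)) =
        (n + 1) / (n + 2) * ∫ x in (0:ℝ)..π, Real.sin x ^ n := by
      simpa [Real.sin_pi] using integral_sin_pow (a := 0) (b := π) (n := n)
    have hne : (n : ℝ) + 1 ≠ 0 := by positivity
    have hne2 : (n : ℝ) + 2 ≠ 0 := by positivity
    push_cast
    rw [hrec, mul_comm (∫ x in (0:ℝ)..π, Real.sin x ^ (n+1)), mul_assoc, ih]
    field_simp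
    ring

private lemma prod_eq_df (m : ℕ) :
    (∏ i ∈ Finset.range m, (2 * (i : ℝ) + 2) / (2 * i + 3)) =
      ((2 * m)‼ : ℝ) / ((2 * m + 1)‼) := by
  induction m with
  | zero => simp
  | succ m ih =>
    rw [Finset.prod_range_succ, ih]
    have d1 : (2 * m + 2)‼ = (2 * m + 2) * (2 * m)‼ := Nat.doubleFactorial_add_two _
    have d2 : (2 * m + 2 + 1)‼ = (2 * m + 3) * (2 * m + 1)‼ := Nat.doubleFactorial_add_two _
    rw [show 2 * (m + 1) = 2 * m + 2 from by ring, d1, d2]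
    have e1 : (((2 * m)‼ : ℕ) : ℝ) ≠ 0 := Nat.cast_ne_zero.mpr (Nat.doubleFactorial_pos _).ne'
    have e2 : (((2 * m + 1)‼ : ℕ) : ℝ) ≠ 0 := Nat.cast_ne_zero.mpr (Nat.doubleFactorial_pos _).ne'
    push_cast
    field_simp

private lemma W_odd (m : ℕ) :
    (∫ x in (0:ℝ)..π, Real.sin x ^ (2 * m + 1)) = 2 * (((2 * m)‼ : ℝ) / ((2 * m + 1)‼)) := by
  rw [integral_sin_pow_odd, prod_eq_df]

theorem stmt_11 (m : ℕ) (hm : 1 ≤ m) :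
    Real.sqrt Real.pi / (2 * Real.sqrt (m + 1)) < ((2 * m)‼ : ℝ) / ((2 * m + 1)‼) ∧
    ((2 * m)‼ : ℝ) / ((2 * m + 1)‼) < Real.sqrt Real.pi / (2 * Real.sqrt m) := by
  set A : ℝ := ((2 * m)‼ : ℝ) / ((2 * m + 1)‼) with hA
  have hApos : 0 < A := by
    apply _root_.div_pos <;> exact_mod_cast Nat.doubleFactorial_pos _
  -- A^2 ≤ π / (2*(2m+1))
  have hW := W_odd m
  have hmono1 : (∫ x in (0:ℝ)..π, Real.sin x ^ (2 * m + 1)) ≤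
      ∫ x in (0:ℝ)..π, Real.sin x ^ (2 * m) := integral_sin_pow_succ_le _
  have hmono2 : (∫ x in (0:ℝ)..π, Real.sin x ^ (2 * m + 1 + 1)) ≤
      ∫ x in (0:ℝ)..π, Real.sin x ^ (2 * m + 1) := integral_sin_pow_succ_le _
  have hP1 := W_mul_succ (2 * m)
  have hP2 := W_mul_succ (2 * m + 1)
  have hWpos : 0 < ∫ x in (0:ℝ)..π, Real.sin x ^ (2 * m + 1) := integral_sin_pow_pos _
  -- upper: (2A)^2 = W^2 ≤ W_{2m} * W_{2m+1} = 2π/(2m+1)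
  have hupper : (2 * A) ^ 2 ≤ 2 * π / (2 * m + 1) := by
    rw [← hW] at *
    calc (∫ x in (0:ℝ)..π, Real.sin x ^ (2 * m + 1)) ^ 2
        ≤ (∫ x in (0:ℝ)..π, Real.sin x ^ (2 * m)) *
            (∫ x in (0:ℝ)..π, Real.sin x ^ (2 * m + 1)) := by
          rw [sq]; exact mul_le_mul_of_nonneg_right hmono1 hWpos.le
      _ = 2 * π / (2 * m + 1) := by push_cast at hP1 ⊢; exact hP1
  have hlower : 2 * π / (2 * m + 2) ≤ (2 * A) ^ 2 := by
    rw [← hW] at *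
    calc 2 * π / (2 * m + 2)
        = (∫ x in (0:ℝ)..π, Real.sin x ^ (2 * m + 1)) *
            (∫ x in (0:ℝ)..π, Real.sin x ^ (2 * m + 1 + 1)) := by
          push_cast at hP2 ⊢; rw [hP2]; ring_nf
      _ ≤ (∫ x in (0:ℝ)..π, Real.sin x ^ (2 * m + 1)) ^ 2 := by
          rw [sq]; exact mul_le_mul_of_nonneg_left hmono2 hWpos.le
  -- strictness of lower bound via irrationality of π
  have hAne : (2 * A) ^ 2 ≠ 2 * π / (2 * m + 2) := by
    intro h
    have hπ : π = (2 * (m : ℝ) + 2) * (2 * A) ^ 2 / 2 := by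
      field_simp at h ⊢
      linarith [h]
    have : Irrational π := irrational_pi
    apply this.ne_rat (((2 * m + 2) * (2 * ((2 * m)‼ : ℚ) / ((2 * m + 1)‼)) ^ 2 / 2 : ℚ))
    rw [hπ, hA]
    push_cast
    ring
  have hlower' : 2 * π / (2 * m + 2) < (2 * A) ^ 2 := lt_of_le_of_ne hlower (Ne.symm hAne)
  have hmpos : (0:ℝ) < m := by exact_mod_cast hm
  have hπpos := Real.pi_pos
  have hsq : ∀ x y : ℝ, 0 ≤ y → x ^ 2 < y ^ 2 → x < y := fun x y hy h =>
    lt_of_pow_lt_pow_left₀ 2 hy h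
  constructor
  · apply hsq _ _ hApos.le
    have hval : (Real.sqrt π / (2 * Real.sqrt ((m:ℝ) + 1))) ^ 2 = π / (4 * ((m:ℝ) + 1)) := by
      rw [div_pow, mul_pow, Real.sq_sqrt hπpos.le, Real.sq_sqrt (by positivity : (0:ℝ) ≤ (m:ℝ)+1)]
      ring
    rw [hval]
    have heq : 2 * π / (2 * (m:ℝ) + 2) = 4 * (π / (4 * ((m:ℝ) + 1))) := by
      field_simp
    nlinarith [hlower']
  · have hbpos : (0:ℝ) < Real.sqrt π / (2 * Real.sqrt (m:ℝ)) := by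
      exact div_pos (Real.sqrt_pos.mpr hπpos) (mul_pos two_pos (Real.sqrt_pos.mpr hmpos))
    apply hsq _ _ hbpos.le
    have hval : (Real.sqrt π / (2 * Real.sqrt (m:ℝ))) ^ 2 = π / (4 * (m:ℝ)) := by
      rw [div_pow, mul_pow, Real.sq_sqrt hπpos.le, Real.sq_sqrt (by positivity : (0:ℝ) ≤ (m:ℝ))]
      ring
    rw [hval]
    -- A^2 ≤ π/(2(2m+1)) < π/(4m)
    have h1 : (2 * A) ^ 2 ≤ 2 * π / (2 * (m:ℝ) + 1) := by push_cast at hupper ⊢; exact hupper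
    have h2 : 2 * π / (2 * (m:ℝ) + 1) < 4 * (π / (4 * (m:ℝ))) := by
      rw [div_lt_iff₀ (by positivity)]
      have : 4 * (π / (4 * (m:ℝ))) = π / (m:ℝ) := by field_simp
      rw [this, div_mul_eq_mul_div, lt_div_iff₀ hmpos]
      nlinarith
    nlinarith
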